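/- Let d, L ≥ 1, and let A₁, A₂, A₃, Y ∈ ℝ^{d×L} and W, W_{OV} ∈ ℝ^{d×d}. With 𝔸 := A₁ᵀ ⊗ A₂ᵀ ∈ ℝ^{L²×d²}, define f(W) ∈ ℝ^{L×L} whose j₀-th row is f(W)_{j₀}ᵀ where f(W)_{j₀} := exp(𝔸_{j₀} vec(W)) / ⟨exp(𝔸_{j₀} vec(W)), 1_L⟩; h(W_{OV}) ∈ ℝ^{L×d} whose i₀-th column is A₃ᵀ(W_{OV}ᵀ)_{*,i₀}; c(W) := f(W) h(W_{OV}) − Yᵀ ∈ ℝ^{L×d}; q(W) := c(W) h(W_{OV})ᵀ ∈ ℝ^{L×L} with rows q(W)_{j₀}ᵀ; and p(W) ∈ ℝ^{L×L} whose j₀-th row is p(W)_{j₀}ᵀ with p(W)_{j₀} := (diag(f(W)_{j₀}) − f(W)_{j₀} f(W)_{j₀}ᵀ) q(W)_{j₀}. Then the gradient with respect to vec(W) of G(W) := (1/2) Σ_{j₀=1}^{L} Σ_{i₀=1}^{d} c(W)_{j₀,i₀}² equals vec(A₁ p(W) A₂ᵀ). -/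

import Mathlib

open Matrix BigOperators

namespace DiTGradMat

variable {d L : ℕ}

/-- The `j₀`-th block of `L` consecutive rows of `𝔸 = A₁ᵀ ⊗ A₂ᵀ`. -/
noncomputable def Ablock (A₁ A₂ : Matrix (Fin d) (Fin L) ℝ) (j₀ : Fin L) :
    Matrix (Fin L) (Fin d × Fin d) ℝ :=
  Matrix.of fun j p => Matrix.kroneckerMap (· * ·) A₁ᵀ A₂ᵀ (j₀, j) p

/-- `f(W)_{j₀} = exp(𝔸_{j₀} vec(W)) / ⟨exp(𝔸_{j₀} vec(W)), 1_L⟩`. -/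
noncomputable def fVec (A₁ A₂ : Matrix (Fin d) (Fin L) ℝ) (j₀ : Fin L)
    (w : Fin d × Fin d → ℝ) : Fin L → ℝ :=
  fun j => Real.exp ((Ablock A₁ A₂ j₀).mulVec w j)
    / ∑ j', Real.exp ((Ablock A₁ A₂ j₀).mulVec w j')

/-- `h(W_{OV}) ∈ ℝ^{L×d}`, whose `i₀`-th column is `A₃ᵀ (W_{OV}ᵀ)_{*,i₀}`. -/
noncomputable def hMat (A₃ : Matrix (Fin d) (Fin L) ℝ) (WOV : Matrix (Fin d) (Fin d) ℝ) :
    Matrix (Fin L) (Fin d) ℝ :=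
  Matrix.of fun j i₀ => ∑ i, A₃ i j * WOV i₀ i

/-- `c(W) = f(W) h(W_{OV}) − Yᵀ ∈ ℝ^{L×d}`. -/
noncomputable def cMat (A₁ A₂ A₃ Y : Matrix (Fin d) (Fin L) ℝ)
    (WOV : Matrix (Fin d) (Fin d) ℝ) (w : Fin d × Fin d → ℝ) :
    Matrix (Fin L) (Fin d) ℝ :=
  Matrix.of fun j₀ i₀ => (∑ j, fVec A₁ A₂ j₀ w j * hMat A₃ WOV j i₀) - Yᵀ j₀ i₀

/-- `q(W) = c(W) h(W_{OV})ᵀ ∈ ℝ^{L×L}`. -/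
noncomputable def qMat (A₁ A₂ A₃ Y : Matrix (Fin d) (Fin L) ℝ)
    (WOV : Matrix (Fin d) (Fin d) ℝ) (w : Fin d × Fin d → ℝ) :
    Matrix (Fin L) (Fin L) ℝ :=
  cMat A₁ A₂ A₃ Y WOV w * (hMat A₃ WOV)ᵀ

/-- `p(W) ∈ ℝ^{L×L}`, whose `j₀`-th row is
`((diag(f(W)_{j₀}) − f(W)_{j₀} f(W)_{j₀}ᵀ) q(W)_{j₀})ᵀ`. -/
noncomputable def pMat (A₁ A₂ A₃ Y : Matrix (Fin d) (Fin L) ℝ)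
    (WOV : Matrix (Fin d) (Fin d) ℝ) (w : Fin d × Fin d → ℝ) :
    Matrix (Fin L) (Fin L) ℝ :=
  Matrix.of fun j₀ j =>
    fVec A₁ A₂ j₀ w j * qMat A₁ A₂ A₃ Y WOV w j₀ j
      - fVec A₁ A₂ j₀ w j * ∑ j', fVec A₁ A₂ j₀ w j' * qMat A₁ A₂ A₃ Y WOV w j₀ j'

/-- The DiT loss `G(W) = (1/2) Σ_{j₀,i₀} c(W)_{j₀,i₀}²` as a function of `vec(W)`. -/
noncomputable def lossG (A₁ A₂ A₃ Y : Matrix (Fin d) (Fin L) ℝ)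
    (WOV : Matrix (Fin d) (Fin d) ℝ) (w : Fin d × Fin d → ℝ) : ℝ :=
  (1 / 2) * ∑ j₀, ∑ i₀, (cMat A₁ A₂ A₃ Y WOV w j₀ i₀) ^ 2

/-- Scalar softmax 1-D derivative. -/
lemma softmax_hasDerivAt {L : ℕ} (hL : 0 < L) (a b : Fin L → ℝ) (j : Fin L) :
    HasDerivAt (fun t : ℝ => Real.exp (a j + t * b j) / ∑ j', Real.exp (a j' + t * b j'))
      ((Real.exp (a j) / ∑ j', Real.exp (a j')) * b j -
        (Real.exp (a j) / ∑ j', Real.exp (a j')) *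
          ∑ j', (Real.exp (a j') / ∑ j'', Real.exp (a j'')) * b j') 0 := by
  haveI : NeZero L := ⟨hL.ne'⟩
  have hS : (0:ℝ) < ∑ j', Real.exp (a j') :=
    Finset.sum_pos (fun _ _ => Real.exp_pos _) Finset.univ_nonempty
  have hnum : ∀ j' : Fin L,
      HasDerivAt (fun t : ℝ => Real.exp (a j' + t * b j')) (Real.exp (a j') * b j') 0 := by
    intro j'
    have h1 : HasDerivAt (fun t : ℝ => a j' + t * b j') (b j') 0 := by
      simpa using ((hasDerivAt_id (0:ℝ)).mul_const (b j')).const_add (a j')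
    simpa using h1.exp
  have hden : HasDerivAt (fun t : ℝ => ∑ j', Real.exp (a j' + t * b j'))
      (∑ j', Real.exp (a j') * b j') 0 := HasDerivAt.fun_sum (fun j' _ => hnum j')
  have hd := (hnum j).fun_div hden (by simpa using hS.ne')
  simp only [zero_mul, add_zero] at hd
  refine hd.congr_deriv ?_
  have hsum : ∑ j', (Real.exp (a j') / ∑ j'', Real.exp (a j'')) * b j'
      = (∑ j', Real.exp (a j') * b j') / ∑ j'', Real.exp (a j'') := by
    rw [Finset.sum_div]
    exact Finset.sum_congr rfl fun j' _ => by ring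
  rw [hsum]
  field_simp

lemma lossG_differentiable {d L : ℕ} (hL : 0 < L)
    (A₁ A₂ A₃ Y : Matrix (Fin d) (Fin L) ℝ) (WOV : Matrix (Fin d) (Fin d) ℝ) :
    Differentiable ℝ (lossG A₁ A₂ A₃ Y WOV) := by
  haveI : NeZero L := ⟨hL.ne'⟩
  have hlin : ∀ (j₀ j : Fin L), Differentiable ℝ
      (fun w : Fin d × Fin d → ℝ => (Ablock A₁ A₂ j₀).mulVec w j) := by
    intro j₀ j
    simp only [Matrix.mulVec, dotProduct]
    exact Differentiable.fun_sum fun p' _ =>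
      (differentiable_const _).fun_mul (differentiable_apply p')
  have hf : ∀ (j₀ j : Fin L), Differentiable ℝ
      (fun w : Fin d × Fin d → ℝ => fVec A₁ A₂ j₀ w j) := by
    intro j₀ j
    have hpos : ∀ w : Fin d × Fin d → ℝ,
        (∑ j', Real.exp ((Ablock A₁ A₂ j₀).mulVec w j')) ≠ 0 :=
      fun w => (Finset.sum_pos (fun _ _ => Real.exp_pos _) Finset.univ_nonempty).ne'
    have : Differentiable ℝ (fun w : Fin d × Fin d → ℝ =>
        Real.exp ((Ablock A₁ A₂ j₀).mulVec w j) *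
          (∑ j', Real.exp ((Ablock A₁ A₂ j₀).mulVec w j'))⁻¹) :=
      ((hlin j₀ j).exp).mul
        ((Differentiable.fun_sum fun j' _ => (hlin j₀ j').exp).inv hpos)
    simpa [div_eq_mul_inv, fVec] using this
  have hc : ∀ (j₀ : Fin L) (i₀ : Fin d), Differentiable ℝ
      (fun w : Fin d × Fin d → ℝ => cMat A₁ A₂ A₃ Y WOV w j₀ i₀) := by
    intro j₀ i₀
    simp only [cMat, Matrix.of_apply]
    exact (Differentiable.fun_sum fun j _ => (hf j₀ j).mul_const _).sub_const _
  unfold lossG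
  exact (Differentiable.fun_sum fun j₀ _ =>
    Differentiable.fun_sum fun i₀ _ => (hc j₀ i₀).pow 2).const_mul _


/-- Per-row algebraic identity for the softmax Jacobian contraction. -/
lemma sum_algebra {L : ℕ} (E β q : Fin L → ℝ) :
    ∑ j, (E j * β j - E j * ∑ j', E j' * β j') * q j
      = ∑ j, β j * (E j * q j - E j * ∑ j', E j' * q j') := by
  have h1 : ∑ j, (E j * β j - E j * ∑ j', E j' * β j') * q j
      = (∑ j, E j * β j * q j) - (∑ j', E j' * β j') * (∑ j', E j' * q j') := by
    simp only [sub_mul, Finset.sum_sub_distrib]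
    congr 1
    rw [Finset.mul_sum]
    exact Finset.sum_congr rfl fun j _ => by ring
  have h2 : ∑ j, β j * (E j * q j - E j * ∑ j', E j' * q j')
      = (∑ j, E j * β j * q j) - (∑ j', E j' * β j') * (∑ j', E j' * q j') := by
    simp only [mul_sub, Finset.sum_sub_distrib]
    congr 1
    · exact Finset.sum_congr rfl fun j _ => by ring
    · rw [Finset.sum_mul]
      exact Finset.sum_congr rfl fun j _ => by ring
  rw [h1, h2]

/-- Exchange of summation: contract against `h` first. -/
lemma sum_swap_mul {L d : ℕ} (c : Fin d → ℝ) (g : Fin L → ℝ) (h : Fin L → Fin d → ℝ) :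
    ∑ i₀, c i₀ * ∑ j, g j * h j i₀ = ∑ j, g j * ∑ i₀, c i₀ * h j i₀ := by
  simp_rw [Finset.mul_sum]
  rw [Finset.sum_comm]
  exact Finset.sum_congr rfl fun j _ => Finset.sum_congr rfl fun i₀ _ => by ring

/-- The DiT training gradient equals `vec(A₁ p(W) A₂ᵀ)`, stated componentwise: the partial
derivative of `G` at `vec(W)` in coordinate `p` equals `(A₁ p(W) A₂ᵀ)_{p.1, p.2}`. -/
theorem dit_gradient_matrix_form
    (d L : ℕ) (hd : 1 ≤ d) (hL : 1 ≤ L)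
    (A₁ A₂ A₃ Y : Matrix (Fin d) (Fin L) ℝ) (W WOV : Matrix (Fin d) (Fin d) ℝ)
    (p : Fin d × Fin d) :
    fderiv ℝ (lossG A₁ A₂ A₃ Y WOV) (fun q : Fin d × Fin d => W q.1 q.2) (Pi.single p 1)
      = (A₁ * pMat A₁ A₂ A₃ Y WOV (fun q => W q.1 q.2) * A₂ᵀ) p.1 p.2 := by
  have hL0 : 0 < L := hL
  haveI : NeZero L := ⟨hL0.ne'⟩
  set w₀ : Fin d × Fin d → ℝ := fun q => W q.1 q.2 with hw₀def
  set v : Fin d × Fin d → ℝ := Pi.single p 1 with hvdef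
  -- derivative of each softmax entry along the line t ↦ w₀ + t • v
  have hfun : ∀ (j₀ j : Fin L), (fun t : ℝ => fVec A₁ A₂ j₀ (w₀ + t • v) j)
      = fun t : ℝ => Real.exp ((Ablock A₁ A₂ j₀).mulVec w₀ j
            + t * (Ablock A₁ A₂ j₀).mulVec v j)
          / ∑ j', Real.exp ((Ablock A₁ A₂ j₀).mulVec w₀ j'
            + t * (Ablock A₁ A₂ j₀).mulVec v j') := by
    intro j₀ j
    funext t
    simp [fVec, Matrix.mulVec_add, Matrix.mulVec_smul, Pi.add_apply, Pi.smul_apply,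
      smul_eq_mul]
  have hfder : ∀ (j₀ j : Fin L), HasDerivAt (fun t : ℝ => fVec A₁ A₂ j₀ (w₀ + t • v) j)
      (fVec A₁ A₂ j₀ w₀ j * (Ablock A₁ A₂ j₀).mulVec v j
        - fVec A₁ A₂ j₀ w₀ j
            * ∑ j', fVec A₁ A₂ j₀ w₀ j' * (Ablock A₁ A₂ j₀).mulVec v j') 0 := by
    intro j₀ j
    rw [hfun j₀ j]
    have := softmax_hasDerivAt hL0 ((Ablock A₁ A₂ j₀).mulVec w₀)
      ((Ablock A₁ A₂ j₀).mulVec v) j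
    simpa [fVec] using this
  -- derivative of each residual entry
  have hcder : ∀ (j₀ : Fin L) (i₀ : Fin d),
      HasDerivAt (fun t : ℝ => cMat A₁ A₂ A₃ Y WOV (w₀ + t • v) j₀ i₀)
        (∑ j, (fVec A₁ A₂ j₀ w₀ j * (Ablock A₁ A₂ j₀).mulVec v j
            - fVec A₁ A₂ j₀ w₀ j
                * ∑ j', fVec A₁ A₂ j₀ w₀ j' * (Ablock A₁ A₂ j₀).mulVec v j')
          * hMat A₃ WOV j i₀) 0 := by
    intro j₀ i₀
    simp only [cMat, Matrix.of_apply]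
    exact (HasDerivAt.fun_sum fun j _ => (hfder j₀ j).mul_const _).sub_const _
  -- derivative of the loss along the line
  have h00 : w₀ + (0:ℝ) • v = w₀ := by simp
  have hGder : HasDerivAt (fun t : ℝ => lossG A₁ A₂ A₃ Y WOV (w₀ + t • v))
      ((1/2 : ℝ) * ∑ j₀, ∑ i₀, ((2:ℕ) * cMat A₁ A₂ A₃ Y WOV w₀ j₀ i₀ ^ 1
        * ∑ j, (fVec A₁ A₂ j₀ w₀ j * (Ablock A₁ A₂ j₀).mulVec v j
            - fVec A₁ A₂ j₀ w₀ j
                * ∑ j', fVec A₁ A₂ j₀ w₀ j' * (Ablock A₁ A₂ j₀).mulVec v j')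
          * hMat A₃ WOV j i₀)) 0 := by
    unfold lossG
    have := (HasDerivAt.fun_sum (u := Finset.univ)
      (fun j₀ _ => HasDerivAt.fun_sum (u := Finset.univ)
        (fun i₀ _ => ((hcder j₀ i₀).pow 2)))).const_mul (1/2 : ℝ)
    simpa [h00] using this
  -- identify the directional derivative with fderiv applied to v
  have hdiff : DifferentiableAt ℝ (lossG A₁ A₂ A₃ Y WOV) w₀ :=
    (lossG_differentiable hL0 A₁ A₂ A₃ Y WOV).differentiableAt
  have hline : HasDerivAt (fun t : ℝ => w₀ + t • v) v 0 := by
    simpa using ((hasDerivAt_id (0:ℝ)).smul_const v).const_add w₀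
  have hfd : HasFDerivAt (lossG A₁ A₂ A₃ Y WOV)
      (fderiv ℝ (lossG A₁ A₂ A₃ Y WOV) w₀) ((fun t : ℝ => w₀ + t • v) 0) := by
    simpa [h00] using hdiff.hasFDerivAt
  have hcomp : HasDerivAt (fun t : ℝ => lossG A₁ A₂ A₃ Y WOV (w₀ + t • v))
      (fderiv ℝ (lossG A₁ A₂ A₃ Y WOV) w₀ v) 0 :=
    hfd.comp_hasDerivAt (f := fun t : ℝ => w₀ + t • v) 0 hline
  have hval := hcomp.unique hGder
  rw [hval]
  -- final algebra
  have hbb : ∀ (j₀ j : Fin L), (Ablock A₁ A₂ j₀).mulVec v j = A₁ p.1 j₀ * A₂ p.2 j := by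
    intro j₀ j
    simp [hvdef, Matrix.mulVec_single, Ablock, Matrix.kroneckerMap]
  have hq : ∀ (j₀ j : Fin L), qMat A₁ A₂ A₃ Y WOV w₀ j₀ j
      = ∑ i₀, cMat A₁ A₂ A₃ Y WOV w₀ j₀ i₀ * hMat A₃ WOV j i₀ := by
    intro j₀ j
    simp [qMat, Matrix.mul_apply, Matrix.transpose_apply]
  calc (1/2 : ℝ) * ∑ j₀, ∑ i₀, ((2:ℕ) * cMat A₁ A₂ A₃ Y WOV w₀ j₀ i₀ ^ 1
        * ∑ j, (fVec A₁ A₂ j₀ w₀ j * (Ablock A₁ A₂ j₀).mulVec v j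
            - fVec A₁ A₂ j₀ w₀ j
                * ∑ j', fVec A₁ A₂ j₀ w₀ j' * (Ablock A₁ A₂ j₀).mulVec v j')
          * hMat A₃ WOV j i₀)
      = ∑ j₀, ∑ i₀, cMat A₁ A₂ A₃ Y WOV w₀ j₀ i₀
          * ∑ j, (fVec A₁ A₂ j₀ w₀ j * (Ablock A₁ A₂ j₀).mulVec v j
            - fVec A₁ A₂ j₀ w₀ j
                * ∑ j', fVec A₁ A₂ j₀ w₀ j' * (Ablock A₁ A₂ j₀).mulVec v j')
          * hMat A₃ WOV j i₀ := by
        rw [Finset.mul_sum]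
        refine Finset.sum_congr rfl fun j₀ _ => ?_
        rw [Finset.mul_sum]
        refine Finset.sum_congr rfl fun i₀ _ => ?_
        push_cast
        ring
      _ = ∑ j₀, ∑ j, (fVec A₁ A₂ j₀ w₀ j * (Ablock A₁ A₂ j₀).mulVec v j
            - fVec A₁ A₂ j₀ w₀ j
                * ∑ j', fVec A₁ A₂ j₀ w₀ j' * (Ablock A₁ A₂ j₀).mulVec v j')
          * qMat A₁ A₂ A₃ Y WOV w₀ j₀ j := by
        refine Finset.sum_congr rfl fun j₀ _ => ?_
        refine (sum_swap_mul (fun i₀ => cMat A₁ A₂ A₃ Y WOV w₀ j₀ i₀) _ _).trans ?_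
        exact Finset.sum_congr rfl fun j _ => by rw [hq]
      _ = ∑ j₀, ∑ j, (Ablock A₁ A₂ j₀).mulVec v j
            * (fVec A₁ A₂ j₀ w₀ j * qMat A₁ A₂ A₃ Y WOV w₀ j₀ j
              - fVec A₁ A₂ j₀ w₀ j
                  * ∑ j', fVec A₁ A₂ j₀ w₀ j' * qMat A₁ A₂ A₃ Y WOV w₀ j₀ j') := by
        refine Finset.sum_congr rfl fun j₀ _ => ?_
        exact sum_algebra (fVec A₁ A₂ j₀ w₀) ((Ablock A₁ A₂ j₀).mulVec v)
          (qMat A₁ A₂ A₃ Y WOV w₀ j₀)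
      _ = (A₁ * pMat A₁ A₂ A₃ Y WOV w₀ * A₂ᵀ) p.1 p.2 := by
        simp only [Matrix.mul_apply, Matrix.transpose_apply, Finset.sum_mul]
        rw [Finset.sum_comm]
        refine Finset.sum_congr rfl fun j₀ _ => Finset.sum_congr rfl fun j _ => ?_
        rw [hbb]
        simp only [pMat, Matrix.of_apply]
        ring


end DiTGradMat
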